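/- Let 𝒞 ⊆ ℝ^d be a closed, bounded, convex set containing the origin in its interior, and let h : ℝ^d → [0,+∞] be strictly convex and bounded on 𝒞, equal to +∞ outside 𝒞, with h(0) = 0. Let P ∈ 𝒞 and let 𝕊_P be the set of internal directions at P. Then either D_v h(P) ∈ ℝ for every v ∈ 𝕊_P, or D_v h(P) = −∞ for every v ∈ 𝕊_P. -/

import Mathlib

open MeasureTheory Set Filter Topology
open scoped ENNReal Pointwise

noncomputable section

/-- A relativistic cost structure: a closed, bounded, convex set `C` containing the
origin in its interior, together with a function `h` which is strictly convex and
bounded on `C`, vanishing at the origin, and identically `+∞` outside `C`. -/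
structure RelCost (d : ℕ) where
  C : Set (EuclideanSpace ℝ (Fin d))
  h : EuclideanSpace ℝ (Fin d) → ℝ≥0∞
  isClosed : IsClosed C
  isBounded : Bornology.IsBounded C
  convex : Convex ℝ C
  zero_mem_interior : (0 : EuclideanSpace ℝ (Fin d)) ∈ interior C
  h_zero : h 0 = 0
  h_strictConvexOn : ∀ x ∈ C, ∀ y ∈ C, x ≠ y → ∀ a b : ℝ, 0 < a → 0 < b → a + b = 1 →
    h (a • x + b • y) < ENNReal.ofReal a * h x + ENNReal.ofReal b * h y
  h_bddOn : ∃ M : ℝ≥0∞, M ≠ ⊤ ∧ ∀ z ∈ C, h z ≤ M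
  h_top : ∀ z, z ∉ C → h z = ⊤

/-- The set of transport plans between `μ` and `ν`. -/
def Plans {d : ℕ} (μ ν : Measure (EuclideanSpace ℝ (Fin d))) :
    Set (Measure (EuclideanSpace ℝ (Fin d) × EuclideanSpace ℝ (Fin d))) :=
  {γ | IsProbabilityMeasure γ ∧ γ.map Prod.fst = μ ∧ γ.map Prod.snd = ν}

/-- The cost of a transport plan `γ` at time `t`, for the relativistic cost
`c_t (x, y) = h ((y - x) / t)`. -/
def transportCost {d : ℕ} (R : RelCost d) (t : ℝ)
    (γ : Measure (EuclideanSpace ℝ (Fin d) × EuclideanSpace ℝ (Fin d))) : ℝ≥0∞ :=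
  ∫⁻ p, R.h (t⁻¹ • (p.2 - p.1)) ∂γ

/-- The minimal transport cost `C(t)` between `μ` and `ν` at time `t`. -/
def minCost {d : ℕ} (R : RelCost d) (μ ν : Measure (EuclideanSpace ℝ (Fin d))) (t : ℝ) :
    ℝ≥0∞ :=
  ⨅ γ ∈ Plans μ ν, transportCost R t γ

/-- The critical time `T`. -/
def criticalTime {d : ℕ} (R : RelCost d) (μ ν : Measure (EuclideanSpace ℝ (Fin d))) : ℝ :=
  sInf {t : ℝ | 0 < t ∧ minCost R μ ν t ≠ ⊤}


/-- `v` is an internal direction at `P`: a unit vector such that `P + εv` belongs to the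
interior of `C` for every sufficiently small `ε > 0`. -/
def IsInternalDir {d : ℕ} (C : Set (EuclideanSpace ℝ (Fin d)))
    (P v : EuclideanSpace ℝ (Fin d)) : Prop :=
  ‖v‖ = 1 ∧ ∃ ε₀ > (0 : ℝ), ∀ ε : ℝ, 0 < ε → ε < ε₀ → P + ε • v ∈ interior C


/-! ### Auxiliary lemmas -/

/-- Pure real arithmetic: the sublinearity estimate for difference quotients. -/
lemma div_combo_bound (FW X Y f0 α β ε : ℝ) (hε : 0 < ε) (hα : 0 < α) (hβ : 0 < β)
    (hA : FW ≤ 1/2 * X + 1/2 * Y) :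
    (FW - f0) / ε ≤ α * ((X - f0) / (2*ε*α)) + β * ((Y - f0) / (2*ε*β)) := by
  have e1 : α * ((X - f0) / (2*ε*α)) = (X - f0) / (2*ε) := by
    field_simp
  have e2 : β * ((Y - f0) / (2*ε*β)) = (Y - f0) / (2*ε) := by
    field_simp
  rw [e1, e2, ← add_div, div_le_div_iff₀ hε (by positivity)]
  nlinarith

namespace RelCost

variable {d : ℕ} (R : RelCost d)

lemma h_ne_top' {z : EuclideanSpace ℝ (Fin d)} (hz : z ∈ R.C) : R.h z ≠ ⊤ := by
  obtain ⟨M, hM, hMle⟩ := R.h_bddOn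
  exact fun h => hM (top_le_iff.mp (h ▸ hMle z hz))

lemma toReal_combo {x y : EuclideanSpace ℝ (Fin d)} (hx : x ∈ R.C) (hy : y ∈ R.C)
    {a b : ℝ} (ha : 0 ≤ a) (hb : 0 ≤ b) (hab : a + b = 1) :
    (R.h (a • x + b • y)).toReal ≤ a * (R.h x).toReal + b * (R.h y).toReal := by
  rcases eq_or_ne x y with rfl | hxy
  · rw [← add_smul, hab, one_smul, ← add_mul, hab, one_mul]
  rcases eq_or_lt_of_le ha with rfl | ha
  · simp only [zero_smul, zero_add, zero_mul]
    have hb1 : b = 1 := by linarith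
    subst hb1; simp
  rcases eq_or_lt_of_le hb with rfl | hb
  · simp only [zero_smul, add_zero, zero_mul]
    have ha1 : a = 1 := by linarith
    subst ha1; simp
  have hle := (R.h_strictConvexOn x hx y hy hxy a b ha hb hab).le
  have h1 : ENNReal.ofReal a * R.h x ≠ ⊤ :=
    ENNReal.mul_ne_top ENNReal.ofReal_ne_top (R.h_ne_top' hx)
  have h2 : ENNReal.ofReal b * R.h y ≠ ⊤ :=
    ENNReal.mul_ne_top ENNReal.ofReal_ne_top (R.h_ne_top' hy)
  calc (R.h (a • x + b • y)).toReal
      ≤ (ENNReal.ofReal a * R.h x + ENNReal.ofReal b * R.h y).toReal :=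
        ENNReal.toReal_mono (ENNReal.add_ne_top.mpr ⟨h1, h2⟩) hle
    _ = a * (R.h x).toReal + b * (R.h y).toReal := by
        rw [ENNReal.toReal_add h1 h2, ENNReal.toReal_mul, ENNReal.toReal_mul,
          ENNReal.toReal_ofReal ha.le, ENNReal.toReal_ofReal hb.le]

lemma convexOn_line (P v : EuclideanSpace ℝ (Fin d)) {ε₁ : ℝ}
    (hmem : ∀ ε ∈ Icc (0:ℝ) ε₁, P + ε • v ∈ R.C) :
    ConvexOn ℝ (Icc 0 ε₁) (fun ε => (R.h (P + ε • v)).toReal) := by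
  refine ⟨convex_Icc _ _, fun ε hε δ hδ a b ha hb hab => ?_⟩
  simp only [smul_eq_mul]
  have key : P + (a * ε + b * δ) • v = a • (P + ε • v) + b • (P + δ • v) := by
    have h1 : a • P + b • P = P := by rw [← add_smul, hab, one_smul]
    rw [smul_add, smul_add, add_add_add_comm, h1, smul_smul, smul_smul, add_smul]
  rw [key]
  exact R.toReal_combo (hmem ε hε) (hmem δ hδ) ha hb hab

lemma qMono (P v : EuclideanSpace ℝ (Fin d)) {ε₁ : ℝ}
    (hmem : ∀ ε ∈ Icc (0:ℝ) ε₁, P + ε • v ∈ R.C) :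
    MonotoneOn (fun ε : ℝ => ((R.h (P + ε • v)).toReal - (R.h P).toReal) / ε) (Ioo 0 ε₁) := by
  have hc := R.convexOn_line P v hmem
  intro x hx y hy hxy
  have h0 : (0:ℝ) ∈ Icc (0:ℝ) ε₁ := ⟨le_rfl, (hx.1.trans hx.2).le⟩
  have := hc.secant_mono h0 ⟨hx.1.le, hx.2.le⟩ ⟨hy.1.le, hy.2.le⟩ hx.1.ne' hy.1.ne' hxy
  simpa using this

lemma segment_mem (P v : EuclideanSpace ℝ (Fin d)) (hP : P ∈ R.C) {ε₀ : ℝ} (hε₀ : 0 < ε₀)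
    (hdir : ∀ ε : ℝ, 0 < ε → ε < ε₀ → P + ε • v ∈ interior R.C) :
    ∀ ε ∈ Icc (0:ℝ) (ε₀/2), P + ε • v ∈ R.C := by
  intro ε hε
  rcases eq_or_lt_of_le hε.1 with rfl | hpos
  · simpa using hP
  · exact interior_subset (hdir ε hpos (lt_of_le_of_lt hε.2 (by linarith)))

lemma dir_dichotomy (P v : EuclideanSpace ℝ (Fin d)) (hP : P ∈ R.C)
    (hv : IsInternalDir R.C P v) :
    (∃ L : ℝ, Tendsto (fun ε : ℝ => ((R.h (P + ε • v)).toReal - (R.h P).toReal) / ε)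
      (𝓝[>] 0) (𝓝 L)) ∨
    Tendsto (fun ε : ℝ => ((R.h (P + ε • v)).toReal - (R.h P).toReal) / ε)
      (𝓝[>] 0) atBot := by
  obtain ⟨-, ε₀, hε₀, hdir⟩ := hv
  set q : ℝ → ℝ := fun ε => ((R.h (P + ε • v)).toReal - (R.h P).toReal) / ε with hq
  have hmem := R.segment_mem P v hP hε₀ hdir
  have hmono : MonotoneOn q (Ioo 0 (ε₀/2)) := R.qMono P v hmem
  have hne : (Ioo (0:ℝ) (ε₀/2)).Nonempty := ⟨ε₀/4, by constructor <;> linarith⟩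
  by_cases hb : BddBelow (q '' Ioo 0 (ε₀/2))
  · exact Or.inl ⟨_, hmono.tendsto_nhdsWithin_Ioo_right hne hb⟩
  · refine Or.inr (tendsto_atBot.2 fun K => ?_)
    obtain ⟨y, ⟨ε, hε, rfl⟩, hyK⟩ := not_bddBelow_iff.1 hb K
    refine mem_of_superset (Ioo_mem_nhdsGT hε.1) fun ε' hε' => ?_
    exact (hmono ⟨hε'.1, hε'.2.trans hε.2⟩ hε hε'.2.le).trans hyK.le

/-- Decomposition of an internal direction `w` as a positive combination of `v` and
another direction `u` along which `P + εu` stays in the interior. -/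
lemma exists_aux_dir (P : EuclideanSpace ℝ (Fin d)) (hP : P ∈ R.C)
    {v w : EuclideanSpace ℝ (Fin d)} (hv1 : ‖v‖ = 1) (hw : IsInternalDir R.C P w) :
    ∃ (α β : ℝ) (u : EuclideanSpace ℝ (Fin d)), 0 < α ∧ 0 < β ∧ w = α • v + β • u ∧
      ∃ ε₀u > (0:ℝ), ∀ ε : ℝ, 0 < ε → ε < ε₀u → P + ε • u ∈ interior R.C := by
  obtain ⟨hw1, ε₀w, hε₀w, hwdir⟩ := hw
  have hδ₁ : (0:ℝ) < ε₀w / 2 := by linarith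
  have hz₀ : P + (ε₀w / 2) • w ∈ interior R.C := hwdir _ hδ₁ (by linarith)
  obtain ⟨r, hr, hball⟩ := Metric.isOpen_iff.1 isOpen_interior _ hz₀
  obtain ⟨α, hα, hα1, hαr⟩ : ∃ α : ℝ, 0 < α ∧ α < 1 ∧ α * (ε₀w / 2) ≤ r / 2 := by
    refine ⟨min (r / (2 * (ε₀w / 2))) (1/2), lt_min (by positivity) (by norm_num),
      (min_le_right _ _).trans_lt (by norm_num), ?_⟩
    have h1 : min (r / (2 * (ε₀w / 2))) (1/2) ≤ r / (2 * (ε₀w / 2)) := min_le_left _ _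
    have h2 : min (r / (2 * (ε₀w / 2))) (1/2) * (ε₀w / 2)
        ≤ (r / (2 * (ε₀w / 2))) * (ε₀w / 2) := by
      have := lt_min (show (0:ℝ) < r / (2*(ε₀w/2)) by positivity)
        (show (0:ℝ) < 1/2 by norm_num)
      nlinarith
    calc min (r / (2 * (ε₀w / 2))) (1/2) * (ε₀w / 2)
        ≤ (r / (2 * (ε₀w / 2))) * (ε₀w / 2) := h2
      _ = r / 2 := by field_simp
  have hwv : w - α • v ≠ 0 := by
    intro h
    rw [sub_eq_zero] at h
    have : ‖w‖ = α * ‖v‖ := by rw [h, norm_smul, Real.norm_eq_abs, abs_of_pos hα]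
    rw [hw1, hv1, mul_one] at this; linarith
  have hβ : (0:ℝ) < ‖w - α • v‖ := norm_pos_iff.2 hwv
  refine ⟨α, ‖w - α • v‖, ‖w - α • v‖⁻¹ • (w - α • v), hα, hβ, ?_, (ε₀w/2) * ‖w - α • v‖,
    by positivity, ?_⟩
  · rw [smul_inv_smul₀ hβ.ne']; abel
  · intro ε hε hεlt
    have ht0 : 0 < ε / ((ε₀w/2) * ‖w - α • v‖) := by positivity
    have ht1 : ε / ((ε₀w/2) * ‖w - α • v‖) < 1 := (div_lt_one (by positivity)).2 hεlt
    have hz : P + (ε₀w/2) • (w - α • v) ∈ interior R.C := by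
      apply hball
      have hdist : dist (P + (ε₀w/2) • (w - α • v)) (P + (ε₀w/2) • w) = (ε₀w/2) * α := by
        rw [dist_eq_norm,
          show (P + (ε₀w/2) • (w - α • v)) - (P + (ε₀w/2) • w) = (-((ε₀w/2) * α)) • v by module,
          norm_smul, hv1, mul_one, Real.norm_eq_abs, abs_neg, abs_of_pos (by positivity)]
      rw [Metric.mem_ball, hdist]
      nlinarith
    have key : P + ε • (‖w - α • v‖⁻¹ • (w - α • v))
        = (ε / ((ε₀w/2) * ‖w - α • v‖)) • (P + (ε₀w/2) • (w - α • v))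
          + (1 - ε / ((ε₀w/2) * ‖w - α • v‖)) • P := by
      have hco : ε • (‖w - α • v‖⁻¹ • (w - α • v))
          = ((ε / ((ε₀w/2) * ‖w - α • v‖)) * (ε₀w/2)) • (w - α • v) := by
        rw [smul_smul]
        congr 1
        field_simp
      rw [hco]; module
    rw [key]
    exact R.convex.combo_interior_closure_mem_interior hz
      (by rw [R.isClosed.closure_eq]; exact hP) ht0 (by linarith) (by ring)

/-- If the difference quotient tends to `-∞` along one internal direction, it does so
along every internal direction. -/
lemma cross (P : EuclideanSpace ℝ (Fin d)) (hP : P ∈ R.C)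
    (v w : EuclideanSpace ℝ (Fin d)) (hv : IsInternalDir R.C P v)
    (hw : IsInternalDir R.C P w)
    (hbot : Tendsto (fun ε : ℝ => ((R.h (P + ε • v)).toReal - (R.h P).toReal) / ε)
      (𝓝[>] 0) atBot) :
    Tendsto (fun ε : ℝ => ((R.h (P + ε • w)).toReal - (R.h P).toReal) / ε)
      (𝓝[>] 0) atBot := by
  obtain ⟨hv1, ε₀v, hε₀v, hvdir⟩ := hv
  obtain ⟨α, β, u, hα, hβ, hwdecomp, ε₀u, hε₀u, hudir⟩ := R.exists_aux_dir P hP hv1 hw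
  obtain ⟨hw1, ε₀w, hε₀w, hwdir⟩ := hw
  have hmemv := R.segment_mem P v hP hε₀v hvdir
  have hmemw := R.segment_mem P w hP hε₀w hwdir
  have hmemu := R.segment_mem P u hP hε₀u hudir
  have hmonou := R.qMono P u hmemu
  have hcpos : (0:ℝ) < ε₀u/4 := by linarith
  have hcIoo : (ε₀u/4 : ℝ) ∈ Ioo (0:ℝ) (ε₀u/2) := ⟨hcpos, by linarith⟩
  have hε₂ : (0:ℝ) < min (min (ε₀w/2) ((ε₀u/4) / (2*β))) ((ε₀v/2)/(2*α)) :=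
    lt_min (lt_min (by linarith) (by positivity)) (by positivity)
  have claim : ∀ ε ∈ Ioo (0:ℝ) (min (min (ε₀w/2) ((ε₀u/4)/(2*β))) ((ε₀v/2)/(2*α))),
      ((R.h (P + ε • w)).toReal - (R.h P).toReal) / ε
        ≤ α * (((R.h (P + (2*ε*α) • v)).toReal - (R.h P).toReal) / (2*ε*α))
          + β * (((R.h (P + (ε₀u/4) • u)).toReal - (R.h P).toReal) / (ε₀u/4)) := by
    intro ε hε
    have hεpos := hε.1
    have hεw : ε ≤ ε₀w/2 := hε.2.le.trans ((min_le_left _ _).trans (min_le_left _ _))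
    have hεβ : 2*ε*β ≤ ε₀u/4 := by
      have h := hε.2.le.trans ((min_le_left _ _).trans (min_le_right _ _))
      rw [le_div_iff₀ (by positivity)] at h
      linarith
    have hεα : 2*ε*α ≤ ε₀v/2 := by
      have h := hε.2.le.trans (min_le_right _ _)
      rw [le_div_iff₀ (by positivity)] at h
      linarith
    have hx : P + (2*ε*α) • v ∈ R.C := hmemv _ ⟨by positivity, hεα⟩
    have hy : P + (2*ε*β) • u ∈ R.C := hmemu _ ⟨by positivity, by linarith⟩
    have hcombo : P + ε • w
        = (1/2 : ℝ) • (P + (2*ε*α) • v) + (1/2 : ℝ) • (P + (2*ε*β) • u) := by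
      rw [hwdecomp]; module
    have hA := R.toReal_combo hx hy (by norm_num : (0:ℝ) ≤ 1/2)
      (by norm_num : (0:ℝ) ≤ 1/2) (by norm_num)
    rw [← hcombo] at hA
    have hqu : ((R.h (P + (2*ε*β) • u)).toReal - (R.h P).toReal) / (2*ε*β)
        ≤ ((R.h (P + (ε₀u/4) • u)).toReal - (R.h P).toReal) / (ε₀u/4) :=
      hmonou ⟨by positivity, by linarith⟩ hcIoo hεβ
    have step1 := div_combo_bound ((R.h (P + ε • w)).toReal)
      ((R.h (P + (2*ε*α) • v)).toReal) ((R.h (P + (2*ε*β) • u)).toReal)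
      ((R.h P).toReal) α β ε hεpos hα hβ hA
    nlinarith [mul_le_mul_of_nonneg_left hqu hβ.le]
  have hcomp : Tendsto (fun ε : ℝ => 2 * ε * α) (𝓝[>] 0) (𝓝[>] 0) := by
    apply tendsto_nhdsWithin_of_tendsto_nhds_of_eventually_within
    · have h : Tendsto (fun ε : ℝ => 2 * ε * α) (𝓝 0) (𝓝 (2 * 0 * α)) :=
        ((continuous_const.mul continuous_id).mul continuous_const).tendsto 0
      simpa using h.mono_left nhdsWithin_le_nhds
    · filter_upwards [self_mem_nhdsWithin] with ε (hεm : ε ∈ Ioi (0:ℝ))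
      have hε : (0:ℝ) < ε := hεm
      show 2 * ε * α ∈ Ioi (0:ℝ)
      simp only [mem_Ioi]; positivity
  have hg : Tendsto (fun ε : ℝ =>
      α * (((R.h (P + (2*ε*α) • v)).toReal - (R.h P).toReal) / (2*ε*α))
        + β * (((R.h (P + (ε₀u/4) • u)).toReal - (R.h P).toReal) / (ε₀u/4)))
      (𝓝[>] 0) atBot :=
    tendsto_atBot_add_const_right _ _ ((hbot.comp hcomp).const_mul_atBot hα)
  refine tendsto_atBot_mono' _ ?_ hg
  filter_upwards [Ioo_mem_nhdsGT hε₂] with ε hε using claim ε hε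

end RelCost

/-- Realness or constant infiniteness of the directional derivatives: for `P ∈ C`,
either for every internal direction `v` the directional derivative
`D_v h(P) = lim_{ε ↘ 0} (h(P + εv) - h(P))/ε` is a real number, or it is `-∞` for every
internal direction. -/
theorem dirDeriv_real_or_botInfinite {d : ℕ} (R : RelCost d)
    (P : EuclideanSpace ℝ (Fin d)) (hP : P ∈ R.C) :
    (∀ v, IsInternalDir R.C P v → ∃ L : ℝ,
      Tendsto (fun ε : ℝ => ((R.h (P + ε • v)).toReal - (R.h P).toReal) / ε)
        (𝓝[>] 0) (𝓝 L)) ∨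
    (∀ v, IsInternalDir R.C P v →
      Tendsto (fun ε : ℝ => ((R.h (P + ε • v)).toReal - (R.h P).toReal) / ε)
        (𝓝[>] 0) atBot) := by
  by_cases hall : ∀ v, IsInternalDir R.C P v → ∃ L : ℝ,
      Tendsto (fun ε : ℝ => ((R.h (P + ε • v)).toReal - (R.h P).toReal) / ε)
        (𝓝[>] 0) (𝓝 L)
  · exact Or.inl hall
  · push_neg at hall
    obtain ⟨v, hv, hnL⟩ := hall
    have hbot := (R.dir_dichotomy P v hP hv).resolve_left (by
      intro ⟨L, hL⟩
      exact hnL L hL)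
    exact Or.inr fun w hw => R.cross P hP v w hv hw hbot
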